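/- The single-formula sequent ⊥⊗⊥ is not provable in LL, and it does not have a bounded proof in LLTN. -/

import Mathlib

/-- Formulae of propositional-variable-free linear logic. -/
inductive Fm : Type
  | zero | one | top | bot
  | tens (A B : Fm) | parr (A B : Fm)
  | plus (A B : Fm) | awith (A B : Fm)
  | quest (A : Fm) | bang (A : Fm)

/-- Linear negation (De Morgan duality). -/
def Fm.dual : Fm → Fm
  | .zero => .top
  | .top => .zero
  | .one => .bot
  | .bot => .one
  | .tens A B => .parr A.dual B.dual
  | .parr A B => .tens A.dual B.dual
  | .plus A B => .awith A.dual B.dual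
  | .awith A B => .plus A.dual B.dual
  | .quest A => .bang A.dual
  | .bang A => .quest A.dual

/-- A formula of the form ?C. -/
def IsQuest (A : Fm) : Prop := ∃ C, A = Fm.quest C

/-- ⅋⁰A = ⊥, ⅋ⁿ⁺¹A = (⅋ⁿA) ⅋ A. -/
def parrPow : ℕ → Fm → Fm
  | 0, _ => .bot
  | n + 1, A => .parr (parrPow n A) A

/-- ⊗⁰A = 1, ⊗ⁿ⁺¹A = (⊗ⁿA) ⊗ A. -/
def tensPow : ℕ → Fm → Fm
  | 0, _ => .one
  | n + 1, A => .tens (tensPow n A) A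

/-- One-sided sequent calculus LL.  `Γ, A` is encoded as `Γ ++ [A]`. -/
inductive LL : List Fm → Prop
  | one : LL [Fm.one]
  | bot {Γ} : LL Γ → LL (Γ ++ [Fm.bot])
  | top (Γ) : LL (Γ ++ [Fm.top])
  | tens {Γ Δ A B} : LL (Γ ++ [A]) → LL (Δ ++ [B]) → LL (Γ ++ Δ ++ [Fm.tens A B])
  | parr {Γ A B} : LL (Γ ++ [A, B]) → LL (Γ ++ [Fm.parr A B])
  | plusl {Γ A B} : LL (Γ ++ [A]) → LL (Γ ++ [Fm.plus A B])
  | plusr {Γ A B} : LL (Γ ++ [B]) → LL (Γ ++ [Fm.plus A B])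
  | awith {Γ A B} : LL (Γ ++ [A]) → LL (Γ ++ [B]) → LL (Γ ++ [Fm.awith A B])
  | der {Γ A} : LL (Γ ++ [A]) → LL (Γ ++ [Fm.quest A])
  | wk {Γ A} : LL Γ → LL (Γ ++ [Fm.quest A])
  | ctr {Γ A} : LL (Γ ++ [Fm.quest A, Fm.quest A]) → LL (Γ ++ [Fm.quest A])
  | prom {Γ A} : (∀ C ∈ Γ, IsQuest C) → LL (Γ ++ [A]) → LL (Γ ++ [Fm.bang A])
  | ex {Γ Δ A B} : LL (Γ ++ [B, A] ++ Δ) → LL (Γ ++ [A, B] ++ Δ)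
  | cut {Γ Δ A} : LL (Γ ++ [A]) → LL (Fm.dual A :: Δ) → LL (Γ ++ Δ)

/-- LLT: LL with the tensor rule replaced by NewTens. -/
inductive LLT : List Fm → Prop
  | one : LLT [Fm.one]
  | bot {Γ} : LLT Γ → LLT (Γ ++ [Fm.bot])
  | top (Γ) : LLT (Γ ++ [Fm.top])
  | newtens {Γ Δ Θ A B} : (∀ C ∈ Θ, IsQuest C) →
      LLT (Γ ++ Θ ++ [A]) → LLT (Δ ++ Θ ++ [B]) →
      LLT (Γ ++ Δ ++ Θ ++ [Fm.tens A B])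
  | parr {Γ A B} : LLT (Γ ++ [A, B]) → LLT (Γ ++ [Fm.parr A B])
  | plusl {Γ A B} : LLT (Γ ++ [A]) → LLT (Γ ++ [Fm.plus A B])
  | plusr {Γ A B} : LLT (Γ ++ [B]) → LLT (Γ ++ [Fm.plus A B])
  | awith {Γ A B} : LLT (Γ ++ [A]) → LLT (Γ ++ [B]) → LLT (Γ ++ [Fm.awith A B])
  | der {Γ A} : LLT (Γ ++ [A]) → LLT (Γ ++ [Fm.quest A])
  | wk {Γ A} : LLT Γ → LLT (Γ ++ [Fm.quest A])
  | ctr {Γ A} : LLT (Γ ++ [Fm.quest A, Fm.quest A]) → LLT (Γ ++ [Fm.quest A])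
  | prom {Γ A} : (∀ C ∈ Γ, IsQuest C) → LLT (Γ ++ [A]) → LLT (Γ ++ [Fm.bang A])
  | ex {Γ Δ A B} : LLT (Γ ++ [B, A] ++ Δ) → LLT (Γ ++ [A, B] ++ Δ)
  | cut {Γ Δ A} : LLT (Γ ++ [A]) → LLT (Fm.dual A :: Δ) → LLT (Γ ++ Δ)

/-- cc-free provability in LLT: LLT without cut and without contraction. -/
inductive LLTcc : List Fm → Prop
  | one : LLTcc [Fm.one]
  | bot {Γ} : LLTcc Γ → LLTcc (Γ ++ [Fm.bot])
  | top (Γ) : LLTcc (Γ ++ [Fm.top])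
  | newtens {Γ Δ Θ A B} : (∀ C ∈ Θ, IsQuest C) →
      LLTcc (Γ ++ Θ ++ [A]) → LLTcc (Δ ++ Θ ++ [B]) →
      LLTcc (Γ ++ Δ ++ Θ ++ [Fm.tens A B])
  | parr {Γ A B} : LLTcc (Γ ++ [A, B]) → LLTcc (Γ ++ [Fm.parr A B])
  | plusl {Γ A B} : LLTcc (Γ ++ [A]) → LLTcc (Γ ++ [Fm.plus A B])
  | plusr {Γ A B} : LLTcc (Γ ++ [B]) → LLTcc (Γ ++ [Fm.plus A B])
  | awith {Γ A B} : LLTcc (Γ ++ [A]) → LLTcc (Γ ++ [B]) → LLTcc (Γ ++ [Fm.awith A B])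
  | der {Γ A} : LLTcc (Γ ++ [A]) → LLTcc (Γ ++ [Fm.quest A])
  | wk {Γ A} : LLTcc Γ → LLTcc (Γ ++ [Fm.quest A])
  | prom {Γ A} : (∀ C ∈ Γ, IsQuest C) → LLTcc (Γ ++ [A]) → LLTcc (Γ ++ [Fm.bang A])
  | ex {Γ Δ A B} : LLTcc (Γ ++ [B, A] ++ Δ) → LLTcc (Γ ++ [A, B] ++ Δ)

/-- LLTN: LLT with contraction, weakening, dereliction and promotion replaced by
n-ary dereliction and the infinitary (!) rule. -/
inductive LLTN : List Fm → Prop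
  | one : LLTN [Fm.one]
  | bot {Γ} : LLTN Γ → LLTN (Γ ++ [Fm.bot])
  | top (Γ) : LLTN (Γ ++ [Fm.top])
  | newtens {Γ Δ Θ A B} : (∀ C ∈ Θ, IsQuest C) →
      LLTN (Γ ++ Θ ++ [A]) → LLTN (Δ ++ Θ ++ [B]) →
      LLTN (Γ ++ Δ ++ Θ ++ [Fm.tens A B])
  | parr {Γ A B} : LLTN (Γ ++ [A, B]) → LLTN (Γ ++ [Fm.parr A B])
  | plusl {Γ A B} : LLTN (Γ ++ [A]) → LLTN (Γ ++ [Fm.plus A B])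
  | plusr {Γ A B} : LLTN (Γ ++ [B]) → LLTN (Γ ++ [Fm.plus A B])
  | awith {Γ A B} : LLTN (Γ ++ [A]) → LLTN (Γ ++ [B]) → LLTN (Γ ++ [Fm.awith A B])
  | nder {Γ A} (n : ℕ) : LLTN (Γ ++ [parrPow n A]) → LLTN (Γ ++ [Fm.quest A])
  | bang {Γ A} : (∀ n : ℕ, LLTN (Γ ++ [tensPow n A])) → LLTN (Γ ++ [Fm.bang A])
  | ex {Γ Δ A B} : LLTN (Γ ++ [B, A] ++ Δ) → LLTN (Γ ++ [A, B] ++ Δ)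
  | cut {Γ Δ A} : LLTN (Γ ++ [A]) → LLTN (Fm.dual A :: Δ) → LLTN (Γ ++ Δ)

/-- Cut-free provability in LLTN. -/
inductive LLTNcf : List Fm → Prop
  | one : LLTNcf [Fm.one]
  | bot {Γ} : LLTNcf Γ → LLTNcf (Γ ++ [Fm.bot])
  | top (Γ) : LLTNcf (Γ ++ [Fm.top])
  | newtens {Γ Δ Θ A B} : (∀ C ∈ Θ, IsQuest C) →
      LLTNcf (Γ ++ Θ ++ [A]) → LLTNcf (Δ ++ Θ ++ [B]) →
      LLTNcf (Γ ++ Δ ++ Θ ++ [Fm.tens A B])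
  | parr {Γ A B} : LLTNcf (Γ ++ [A, B]) → LLTNcf (Γ ++ [Fm.parr A B])
  | plusl {Γ A B} : LLTNcf (Γ ++ [A]) → LLTNcf (Γ ++ [Fm.plus A B])
  | plusr {Γ A B} : LLTNcf (Γ ++ [B]) → LLTNcf (Γ ++ [Fm.plus A B])
  | awith {Γ A B} : LLTNcf (Γ ++ [A]) → LLTNcf (Γ ++ [B]) → LLTNcf (Γ ++ [Fm.awith A B])
  | nder {Γ A} (n : ℕ) : LLTNcf (Γ ++ [parrPow n A]) → LLTNcf (Γ ++ [Fm.quest A])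
  | bang {Γ A} : (∀ n : ℕ, LLTNcf (Γ ++ [tensPow n A])) → LLTNcf (Γ ++ [Fm.bang A])
  | ex {Γ Δ A B} : LLTNcf (Γ ++ [B, A] ++ Δ) → LLTNcf (Γ ++ [A, B] ++ Δ)

/-- Γ has a bounded proof in LLTN: either a cut-free proof, or a single final cut
whose premises (a proof of a single formula A and a proof of A⊥, Γ) are cut-free. -/
def BoundedLLTN (Γ : List Fm) : Prop :=
  LLTNcf Γ ∨ ∃ A : Fm, LLTNcf [A] ∧ LLTNcf (Fm.dual A :: Γ)

/-- The duplicator formula dup(A) = !( ?(A⊥) ⅋ (!A ⊗ !A) ). -/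
def dup (A : Fm) : Fm :=
  Fm.bang (Fm.parr (Fm.quest A.dual) (Fm.tens (Fm.bang A) (Fm.bang A)))


/-! ### A five-valued phase model -/

/-- The five facts of the phase space over (ℕ,+,0) with pole = positive evens:
`z` = ∅, `p` = positive evens (the pole, = ⊥), `e` = all evens (= 1),
`o` = all odds, `n` = ℕ (= ⊤). -/
inductive V : Type
  | z | p | e | o | n
  deriving DecidableEq

instance : Fintype V where
  elems := ⟨(([V.z, V.p, V.e, V.o, V.n] : List V) : Multiset V), by decide⟩
  complete := fun x => by cases x <;> decide

namespace V

def dual : V → V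
  | z => n | n => z | p => e | e => p | o => o

def tens : V → V → V
  | z, _ => z | _, z => z
  | n, _ => n | _, n => n
  | p, p => p | p, e => p | e, p => p
  | p, o => o | o, p => o
  | e, e => e
  | e, o => o | o, e => o
  | o, o => p

def par (a b : V) : V := (a.dual.tens b.dual).dual

def plus : V → V → V
  | z, x => x | x, z => x
  | n, _ => n | _, n => n
  | p, p => p | p, e => e | e, p => e | e, e => e
  | p, o => n | o, p => n | e, o => n | o, e => n
  | o, o => o

def awith : V → V → V
  | z, _ => z | _, z => z
  | n, x => x | x, n => x
  | p, p => p | p, e => p | e, p => p | e, e => e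
  | p, o => z | o, p => z | e, o => z | o, e => z
  | o, o => o

def qV : V → V
  | p => p | z => p | e => e | o => n | n => n

def bV : V → V
  | e => e | n => e | p => p | o => z | z => z

def Good (x : V) : Prop := x = e ∨ x = n

instance : DecidablePred Good := fun x => inferInstanceAs (Decidable (_ ∨ _))

def QS (x : V) : Prop := x = p ∨ x = e ∨ x = n

instance : DecidablePred QS := fun x => inferInstanceAs (Decidable (_ ∨ _))

lemma par_assoc : ∀ a b c : V, (a.par b).par c = a.par (b.par c) := by decide
lemma par_comm : ∀ a b : V, a.par b = b.par a := by decide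
lemma p_par : ∀ a : V, V.p.par a = a := by decide
lemma par_p : ∀ a : V, a.par V.p = a := by decide

end V

/-- interpretation of formulae -/
def vF : Fm → V
  | .zero => .z
  | .one => .e
  | .top => .n
  | .bot => .p
  | .tens A B => (vF A).tens (vF B)
  | .parr A B => (vF A).par (vF B)
  | .plus A B => (vF A).plus (vF B)
  | .awith A B => (vF A).awith (vF B)
  | .quest A => V.qV (vF A)
  | .bang A => V.bV (vF A)

lemma vF_dual : ∀ A : Fm, vF A.dual = (vF A).dual := by
  have hd : ∀ x : V, x.dual.dual = x := by decide
  have ht : ∀ x y : V, x.dual.par y.dual = (x.tens y).dual := by decide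
  have hp : ∀ x y : V, x.dual.tens y.dual = (x.par y).dual := by decide
  have hpl : ∀ x y : V, x.dual.awith y.dual = (x.plus y).dual := by decide
  have haw : ∀ x y : V, x.dual.plus y.dual = (x.awith y).dual := by decide
  have hq : ∀ x : V, V.bV x.dual = (V.qV x).dual := by decide
  have hb : ∀ x : V, V.qV x.dual = (V.bV x).dual := by decide
  intro A
  induction A with
  | zero => rfl
  | one => rfl
  | top => rfl
  | bot => rfl
  | tens A B ihA ihB => show (vF A.dual).par (vF B.dual) = _; rw [ihA, ihB, ht]; rfl
  | parr A B ihA ihB => show (vF A.dual).tens (vF B.dual) = _; rw [ihA, ihB, hp]; rfl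
  | plus A B ihA ihB => show (vF A.dual).awith (vF B.dual) = _; rw [ihA, ihB, hpl]; rfl
  | awith A B ihA ihB => show (vF A.dual).plus (vF B.dual) = _; rw [ihA, ihB, haw]; rfl
  | quest A ih => show V.bV (vF A.dual) = _; rw [ih, hq]; rfl
  | bang A ih => show V.qV (vF A.dual) = _; rw [ih, hb]; rfl

/-- interpretation of sequents -/
def wF (Γ : List Fm) : V := Γ.foldl (fun x A => x.par (vF A)) V.p

lemma foldl_par (Γ : List Fm) :
    ∀ i j : V, Γ.foldl (fun x A => x.par (vF A)) (i.par j)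
      = i.par (Γ.foldl (fun x A => x.par (vF A)) j) := by
  induction Γ with
  | nil => intro i j; rfl
  | cons A Γ ih =>
      intro i j
      simp only [List.foldl_cons]
      rw [V.par_assoc]
      exact ih i (j.par (vF A))

lemma wF_nil : wF [] = V.p := rfl

lemma wF_cons (A : Fm) (Γ : List Fm) : wF (A :: Γ) = (vF A).par (wF Γ) := by
  have h := foldl_par Γ (vF A) V.p
  rw [V.par_p] at h
  show List.foldl (fun x A => x.par (vF A)) (V.p.par (vF A)) Γ = _
  rw [V.p_par]
  exact h

lemma wF_append (Γ Δ : List Fm) : wF (Γ ++ Δ) = (wF Γ).par (wF Δ) := by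
  have h := foldl_par Δ (wF Γ) V.p
  rw [V.par_p] at h
  unfold wF
  rw [List.foldl_append]
  exact h

lemma wF_singleton (A : Fm) : wF [A] = vF A := by
  rw [wF_cons, wF_nil, V.par_p]

lemma wF_pair (A B : Fm) : wF [A, B] = (vF A).par (vF B) := by
  rw [wF_cons, wF_singleton]

lemma QS_wF {Θ : List Fm} (h : ∀ C ∈ Θ, IsQuest C) : V.QS (wF Θ) := by
  have hq : ∀ x : V, V.QS (V.qV x) := by decide
  have hc : ∀ x y : V, V.QS x → V.QS y → V.QS (x.par y) := by decide
  induction Θ with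
  | nil => exact Or.inl rfl
  | cons C Θ ih =>
      rw [wF_cons]
      obtain ⟨D, rfl⟩ := h C (by simp)
      exact hc _ _ (hq (vF D)) (ih fun C hC => h C (by simp [hC]))

/-- V-level soundness of the rules -/
lemma L_bot : ∀ g : V, g.Good → (g.par V.p).Good := by decide
lemma L_top : ∀ g : V, (g.par V.n).Good := by decide
lemma L_tens : ∀ g d a b : V, (g.par a).Good → (d.par b).Good →
    ((g.par d).par (a.tens b)).Good := by decide
lemma L_newtens : ∀ g d t a b : V, t.QS → ((g.par t).par a).Good →
    ((d.par t).par b).Good → (((g.par d).par t).par (a.tens b)).Good := by decide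
lemma L_parr : ∀ g a b : V, (g.par (a.par b)).Good → (g.par (a.par b)).Good := fun _ _ _ h => h
lemma L_plusl : ∀ g a b : V, (g.par a).Good → (g.par (a.plus b)).Good := by decide
lemma L_plusr : ∀ g a b : V, (g.par b).Good → (g.par (a.plus b)).Good := by decide
lemma L_awith : ∀ g a b : V, (g.par a).Good → (g.par b).Good →
    (g.par (a.awith b)).Good := by decide
lemma L_der : ∀ g a : V, (g.par a).Good → (g.par (V.qV a)).Good := by decide
lemma L_wk : ∀ g a : V, g.Good → (g.par (V.qV a)).Good := by decide
lemma L_ctr : ∀ g a : V, (g.par ((V.qV a).par (V.qV a))).Good →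
    (g.par (V.qV a)).Good := by decide
lemma L_prom : ∀ g a : V, g.QS → (g.par a).Good → (g.par (V.bV a)).Good := by decide
lemma L_ex : ∀ g d a b : V, ((g.par (b.par a)).par d).Good →
    ((g.par (a.par b)).par d).Good := by decide
lemma L_cut : ∀ g d a : V, (g.par a).Good → (a.dual.par d).Good →
    (g.par d).Good := by decide

def ppV : ℕ → V → V
  | 0, _ => V.p
  | k + 1, a => (ppV k a).par a

def tpV : ℕ → V → V
  | 0, _ => V.e
  | k + 1, a => (tpV k a).tens a

lemma vF_parrPow : ∀ (k : ℕ) (A : Fm), vF (parrPow k A) = ppV k (vF A) := by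
  intro k A; induction k with
  | zero => rfl
  | succ k ih => show (vF (parrPow k A)).par (vF A) = _; rw [ih]; rfl

lemma vF_tensPow : ∀ (k : ℕ) (A : Fm), vF (tensPow k A) = tpV k (vF A) := by
  intro k A; induction k with
  | zero => rfl
  | succ k ih => show (vF (tensPow k A)).tens (vF A) = _; rw [ih]; rfl

lemma L_nder : ∀ (k : ℕ) (g a : V), (g.par (ppV k a)).Good → (g.par (V.qV a)).Good := by
  intro k
  induction k with
  | zero => exact (by decide : ∀ g a : V, (g.par (ppV 0 a)).Good → (g.par (V.qV a)).Good)
  | succ k ih =>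
      intro g a h
      have h' : ((g.par a).par (ppV k a)).Good := by
        have : g.par (ppV (k+1) a) = (g.par a).par (ppV k a) := by
          show g.par ((ppV k a).par a) = _
          rw [V.par_assoc, V.par_comm (ppV k a) a, ← V.par_assoc]
        rwa [this] at h
      have := ih (g.par a) a h'
      revert this
      exact (by decide : ∀ g a : V, ((g.par a).par (V.qV a)).Good → (g.par (V.qV a)).Good) g a

lemma L_bang : ∀ g a : V, (g.par (tpV 0 a)).Good → (g.par (tpV 1 a)).Good →
    (g.par (tpV 2 a)).Good → (g.par (V.bV a)).Good := by decide

/-- Soundness of LL -/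
theorem soundLL {Γ : List Fm} (h : LL Γ) : (wF Γ).Good := by
  induction h with
  | one => decide
  | bot _ ih => rw [wF_append, wF_singleton]; exact L_bot _ ih
  | top Γ => rw [wF_append, wF_singleton]; exact L_top _
  | @tens Γ Δ A B _ _ ih1 ih2 =>
      rw [wF_append, wF_singleton] at ih1 ih2
      rw [wF_append, wF_append, wF_singleton]
      exact L_tens _ _ _ _ ih1 ih2
  | @parr Γ A B _ ih =>
      rw [wF_append, wF_pair] at ih
      rw [wF_append, wF_singleton]
      exact ih
  | @plusl Γ A B _ ih =>
      rw [wF_append, wF_singleton] at ih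
      rw [wF_append, wF_singleton]
      exact L_plusl _ _ _ ih
  | @plusr Γ A B _ ih =>
      rw [wF_append, wF_singleton] at ih
      rw [wF_append, wF_singleton]
      exact L_plusr _ _ _ ih
  | @awith Γ A B _ _ ih1 ih2 =>
      rw [wF_append, wF_singleton] at ih1 ih2
      rw [wF_append, wF_singleton]
      exact L_awith _ _ _ ih1 ih2
  | @der Γ A _ ih =>
      rw [wF_append, wF_singleton] at ih
      rw [wF_append, wF_singleton]
      exact L_der _ _ ih
  | @wk Γ A _ ih =>
      rw [wF_append, wF_singleton]
      exact L_wk _ _ ih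
  | @ctr Γ A _ ih =>
      rw [wF_append, wF_pair] at ih
      rw [wF_append, wF_singleton]
      exact L_ctr _ _ ih
  | @prom Γ A hq _ ih =>
      rw [wF_append, wF_singleton] at ih
      rw [wF_append, wF_singleton]
      exact L_prom _ _ (QS_wF hq) ih
  | @ex Γ Δ A B _ ih =>
      rw [wF_append, wF_append, wF_pair] at ih ⊢
      exact L_ex _ _ _ _ ih
  | @cut Γ Δ A _ _ ih1 ih2 =>
      rw [wF_append, wF_singleton] at ih1
      rw [wF_cons, vF_dual] at ih2
      rw [wF_append]
      exact L_cut _ _ _ ih1 ih2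

/-- Soundness of cut-free LLTN -/
theorem soundLLTNcf {Γ : List Fm} (h : LLTNcf Γ) : (wF Γ).Good := by
  induction h with
  | one => decide
  | bot _ ih => rw [wF_append, wF_singleton]; exact L_bot _ ih
  | top Γ => rw [wF_append, wF_singleton]; exact L_top _
  | @newtens Γ Δ Θ A B hq _ _ ih1 ih2 =>
      rw [wF_append, wF_append, wF_singleton] at ih1 ih2
      rw [wF_append, wF_append, wF_append, wF_singleton]
      exact L_newtens _ _ _ _ _ (QS_wF hq) ih1 ih2
  | @parr Γ A B _ ih =>
      rw [wF_append, wF_pair] at ih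
      rw [wF_append, wF_singleton]
      exact ih
  | @plusl Γ A B _ ih =>
      rw [wF_append, wF_singleton] at ih
      rw [wF_append, wF_singleton]
      exact L_plusl _ _ _ ih
  | @plusr Γ A B _ ih =>
      rw [wF_append, wF_singleton] at ih
      rw [wF_append, wF_singleton]
      exact L_plusr _ _ _ ih
  | @awith Γ A B _ _ ih1 ih2 =>
      rw [wF_append, wF_singleton] at ih1 ih2
      rw [wF_append, wF_singleton]
      exact L_awith _ _ _ ih1 ih2
  | @nder Γ A k _ ih =>
      rw [wF_append, wF_singleton, vF_parrPow] at ih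
      rw [wF_append, wF_singleton]
      exact L_nder k _ _ ih
  | @bang Γ A _ ih =>
      have h0 := ih 0; have h1 := ih 1; have h2 := ih 2
      rw [wF_append, wF_singleton, vF_tensPow] at h0 h1 h2
      rw [wF_append, wF_singleton]
      exact L_bang _ _ h0 h1 h2
  | @ex Γ Δ A B _ ih =>
      rw [wF_append, wF_append, wF_pair] at ih ⊢
      exact L_ex _ _ _ _ ih


/-- The sequent ⊥⊗⊥ is not provable in LL, and has no bounded
proof in LLTN. -/
theorem botTensBot_unprovable :
    ¬ LL [Fm.tens Fm.bot Fm.bot] ∧ ¬ BoundedLLTN [Fm.tens Fm.bot Fm.bot] := by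
  constructor
  · intro h
    have := soundLL h
    rw [wF_singleton] at this
    exact absurd this (by decide)
  · rintro (h | ⟨A, h1, h2⟩)
    · have := soundLLTNcf h
      rw [wF_singleton] at this
      exact absurd this (by decide)
    · have g1 := soundLLTNcf h1
      rw [wF_singleton] at g1
      have g2 := soundLLTNcf h2
      rw [wF_cons, wF_singleton, vF_dual] at g2
      exact (by decide : ∀ x : V, ¬(x.Good ∧ (x.dual.par (vF (Fm.tens Fm.bot Fm.bot))).Good))
        (vF A) ⟨g1, g2⟩
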